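/- Let ω̃_k = ω_k / ‖ω_k‖ where ω_k is the Moser sequence and ‖·‖ an H¹-type norm with ‖ω_k‖² = 1 + d_k/log k where d_k → r²·V/4 for some constant V > 0. Then for |x| ≤ r/k and k large, ω̃_k(x)² ≥ (1/2π)(log k − d_k'), with d_k' → r²V/4. -/

import Mathlib

open MeasureTheory Real Filter

/-- The Moser function on `ℝ²` with parameters `r > 0` and `k`. -/
noncomputable def moser (r : ℝ) (k : ℕ) (x : EuclideanSpace ℝ (Fin 2)) : ℝ :=
  if ‖x‖ ≤ r / k then (Real.log k).sqrt / Real.sqrt (2 * π)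
  else if ‖x‖ ≤ r then Real.log (r / ‖x‖) / (Real.sqrt (2 * π) * (Real.log k).sqrt)
  else 0

/-- Estimate (EstOfwn): if `ω̃_k = ω_k/N k` with `N k² = 1 + d_k/log k`, `N k > 0`,
and `d_k → r² V/4` (`V > 0`), then there is `d'_k → r² V/4` such that for `k` large and
`|x| ≤ r/k`, `ω̃_k(x)² ≥ (1/2π)(log k − d'_k)`. -/
theorem stmt_10 (r V : ℝ) (hr : 0 < r) (hV : 0 < V)
    (d N : ℕ → ℝ) (hNpos : ∀ k, 0 < N k)
    (hN : ∀ k : ℕ, 2 ≤ k → (N k) ^ 2 = 1 + d k / Real.log k)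
    (hd : Tendsto d atTop (nhds (r ^ 2 * V / 4))) :
    ∃ d' : ℕ → ℝ, Tendsto d' atTop (nhds (r ^ 2 * V / 4)) ∧
      ∀ᶠ k : ℕ in atTop, ∀ x : EuclideanSpace ℝ (Fin 2), ‖x‖ ≤ r / k →
        (1 / (2 * π)) * (Real.log k - d' k) ≤ (moser r k x / N k) ^ 2 := by
  refine ⟨fun k => d k / (1 + d k / Real.log k), ?_, ?_⟩
  · have hlog : Tendsto (fun k : ℕ => Real.log k) atTop atTop :=
      Real.tendsto_log_atTop.comp tendsto_natCast_atTop_atTop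
    have h1 : Tendsto (fun k : ℕ => d k / Real.log k) atTop (nhds 0) :=
      hd.div_atTop hlog
    have h2 : Tendsto (fun k : ℕ => 1 + d k / Real.log k) atTop (nhds 1) := by
      simpa using tendsto_const_nhds.add h1
    simpa [Pi.div_def] using hd.div h2 one_ne_zero
  · have hL : (0:ℝ) < r ^ 2 * V / 4 := by positivity
    filter_upwards [hd.eventually (eventually_gt_nhds hL), eventually_ge_atTop 2]
      with k hdk hk2 x hx
    have hlk : 0 < Real.log k := by
      have : (2:ℝ) ≤ (k:ℝ) := by exact_mod_cast hk2
      exact Real.log_pos (by linarith)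
    have hsum : 0 < Real.log k + d k := by linarith
    have hpi : 0 < π := Real.pi_pos
    rw [moser, if_pos hx, div_pow, div_pow, hN k hk2,
      Real.sq_sqrt hlk.le, Real.sq_sqrt (by positivity : (0:ℝ) ≤ 2 * π)]
    apply le_of_eq
    have h1 : 1 + d k / Real.log k = (Real.log k + d k) / Real.log k := by
      field_simp
    rw [h1]
    field_simp
    ring
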